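/- Let (L_n)_{n≥1} be positive reals. If ∑_{n≥1} 1/(n L_n) < ∞, then ∑_{n≥1} (L_1 + ... + L_n)^{-1} < ∞. In fact there is an absolute constant C such that ∑_{n≥1} (L_1 + ... + L_n)^{-1} ≤ C ∑_{n≥1} 1/(n L_n). -/
import Mathlib

open Finset

lemma tele_aux (j : ℕ) : ∀ M, j ≤ M →
    ∑ n ∈ Finset.Icc j M, (((n : ℝ) + 1) ^ 2)⁻¹ ≤ 2 / ((j:ℝ) + 1) - 2 / ((M:ℝ) + 2) := by
  intro M
  induction M with
  | zero =>
    intro hj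
    interval_cases j
    simp only [Finset.Icc_self, Finset.sum_singleton]
    norm_num
  | succ M ih =>
    intro hj
    rcases Nat.lt_or_ge M j with h | h
    · have hjM : j = M + 1 := by omega
      subst hjM
      simp only [Finset.Icc_self, Finset.sum_singleton]
      rw [inv_eq_one_div, div_sub_div _ _ (by positivity) (by positivity),
        div_le_div_iff₀ (by positivity) (by positivity)]
      push_cast
      nlinarith [sq_nonneg ((M:ℝ)+2)]
    · rw [Finset.sum_Icc_succ_top (by omega)]
      have h1 : (((M : ℝ) + 1 + 1) ^ 2)⁻¹ ≤ 2 / ((M:ℝ) + 2) - 2 / ((M:ℝ) + 3) := by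
        rw [inv_eq_one_div, div_sub_div _ _ (by positivity) (by positivity),
          div_le_div_iff₀ (by positivity) (by positivity)]
        nlinarith [sq_nonneg ((M:ℝ)+2)]
      have h2 := ih h
      push_cast
      push_cast at h2
      have e : ((M:ℝ) + 1 + 2) = (M:ℝ) + 3 := by ring
      rw [e]
      linarith

lemma tele (j M : ℕ) : ∑ n ∈ Finset.Icc j M, (((n : ℝ) + 1) ^ 2)⁻¹ ≤ 2 / ((j:ℝ) + 1) := by
  rcases le_or_gt j M with h | h
  · have := tele_aux j M h
    have h2 : (0:ℝ) ≤ 2 / ((M:ℝ) + 2) := by positivity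
    linarith
  · rw [Finset.Icc_eq_empty (by omega)]
    simp only [Finset.sum_empty]
    positivity

/-- AM–HM via Cauchy–Schwarz. -/
lemma amhm (L : ℕ → ℝ) (m : ℕ) (hm : 1 ≤ m) (hL : ∀ i ∈ Finset.Icc 1 m, 0 < L i) :
    (∑ i ∈ Finset.Icc 1 m, L i)⁻¹ ≤ (((m : ℝ)) ^ 2)⁻¹ * ∑ i ∈ Finset.Icc 1 m, (L i)⁻¹ := by
  have hne : (Finset.Icc 1 m).Nonempty := ⟨1, by simp [hm]⟩
  have hs : 0 < ∑ i ∈ Finset.Icc 1 m, L i := Finset.sum_pos hL hne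
  have hs' : 0 < ∑ i ∈ Finset.Icc 1 m, (L i)⁻¹ :=
    Finset.sum_pos (fun i hi => inv_pos.2 (hL i hi)) hne
  have hm' : (0:ℝ) < (m:ℝ) := by exact_mod_cast hm
  have CS := Finset.sum_mul_sq_le_sq_mul_sq (Finset.Icc 1 m)
    (fun i => Real.sqrt (L i)) (fun i => Real.sqrt ((L i)⁻¹))
  have e1 : ∑ i ∈ Finset.Icc 1 m, Real.sqrt (L i) * Real.sqrt ((L i)⁻¹) = (m : ℝ) := by
    have h1 : ∀ i ∈ Finset.Icc 1 m, Real.sqrt (L i) * Real.sqrt ((L i)⁻¹) = (1:ℝ) := by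
      intro i hi
      rw [← Real.sqrt_mul (le_of_lt (hL i hi)), mul_inv_cancel₀ (ne_of_gt (hL i hi)),
        Real.sqrt_one]
    rw [Finset.sum_congr rfl h1, Finset.sum_const, Nat.card_Icc]
    simp
  have e2 : ∑ i ∈ Finset.Icc 1 m, (Real.sqrt (L i)) ^ 2 = ∑ i ∈ Finset.Icc 1 m, L i :=
    Finset.sum_congr rfl (fun i hi => Real.sq_sqrt (le_of_lt (hL i hi)))
  have e3 : ∑ i ∈ Finset.Icc 1 m, (Real.sqrt ((L i)⁻¹)) ^ 2
      = ∑ i ∈ Finset.Icc 1 m, (L i)⁻¹ :=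
    Finset.sum_congr rfl (fun i hi => Real.sq_sqrt (inv_nonneg.2 (le_of_lt (hL i hi))))
  rw [e1, e2, e3] at CS
  rw [inv_eq_one_div, mul_comm, ← div_eq_mul_inv, div_le_div_iff₀ hs (by positivity), one_mul]
  nlinarith [CS]

theorem stmt6 :
    ∃ C : ℝ, 0 < C ∧
      ∀ L : ℕ → ℝ, (∀ i, 1 ≤ i → 0 < L i) →
        Summable (fun n : ℕ => (((n : ℝ) + 1) * L (n + 1))⁻¹) →
          Summable (fun n : ℕ => (∑ i ∈ Finset.Icc 1 (n + 1), L i)⁻¹) ∧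
          ∑' n : ℕ, (∑ i ∈ Finset.Icc 1 (n + 1), L i)⁻¹ ≤
            C * ∑' n : ℕ, (((n : ℝ) + 1) * L (n + 1))⁻¹ := by
  refine ⟨2, by norm_num, ?_⟩
  intro L hL hsum
  set f : ℕ → ℝ := fun n => (((n : ℝ) + 1) * L (n + 1))⁻¹ with hf
  set g : ℕ → ℝ := fun n => (∑ i ∈ Finset.Icc 1 (n + 1), L i)⁻¹ with hg
  have hfnn : ∀ n, 0 ≤ f n := by
    intro n
    have := hL (n + 1) (by omega)
    positivity
  have hgnn : ∀ n, 0 ≤ g n := by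
    intro n
    have : 0 < ∑ i ∈ Finset.Icc 1 (n + 1), L i :=
      Finset.sum_pos (fun i hi => hL i (Finset.mem_Icc.1 hi).1) ⟨1, by simp⟩
    positivity
  set S : ℝ := ∑' n, f n with hS
  have key : ∀ N, ∑ n ∈ Finset.range N, g n ≤ 2 * S := by
    intro N
    have step1 : ∑ n ∈ Finset.range N, g n
        ≤ ∑ n ∈ Finset.range N, ∑ i ∈ Finset.Icc 1 (n + 1),
            (((n : ℝ) + 1) ^ 2)⁻¹ * (L i)⁻¹ := by
      apply Finset.sum_le_sum
      intro n _
      rw [← Finset.mul_sum]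
      have h := amhm L (n + 1) (by omega) (fun i hi => hL i (Finset.mem_Icc.1 hi).1)
      push_cast at h
      exact h
    have step2 : ∑ n ∈ Finset.range N, ∑ i ∈ Finset.Icc 1 (n + 1),
          (((n : ℝ) + 1) ^ 2)⁻¹ * (L i)⁻¹
        = ∑ i ∈ Finset.Icc 1 N, ∑ n ∈ Finset.Icc (i - 1) (N - 1),
            (((n : ℝ) + 1) ^ 2)⁻¹ * (L i)⁻¹ := by
      apply Finset.sum_comm'
      intro n i
      simp only [Finset.mem_range, Finset.mem_Icc]
      omega
    have step3 : ∀ i ∈ Finset.Icc 1 N, ∑ n ∈ Finset.Icc (i - 1) (N - 1),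
          (((n : ℝ) + 1) ^ 2)⁻¹ * (L i)⁻¹ ≤ 2 * (((i : ℝ)) * L i)⁻¹ := by
      intro i hi
      have hi1 : 1 ≤ i := (Finset.mem_Icc.1 hi).1
      obtain ⟨j, rfl⟩ : ∃ j, i = j + 1 := ⟨i - 1, by omega⟩
      have hLi : 0 < L (j + 1) := hL _ (by omega)
      have t := tele j (N - 1)
      rw [← Finset.sum_mul]
      calc (∑ n ∈ Finset.Icc j (N - 1), (((n : ℝ) + 1) ^ 2)⁻¹) * (L (j + 1))⁻¹
          ≤ (2 / ((j : ℝ) + 1)) * (L (j + 1))⁻¹ :=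
            mul_le_mul_of_nonneg_right t (by positivity)
        _ = 2 * (((j + 1 : ℕ) : ℝ) * L (j + 1))⁻¹ := by
            push_cast
            rw [mul_inv, div_eq_mul_inv]
            ring
    have step4 : ∑ i ∈ Finset.Icc 1 N, ((i : ℝ) * L i)⁻¹ = ∑ k ∈ Finset.range N, f k := by
      rw [← Finset.Ico_add_one_right_eq_Icc, Finset.sum_Ico_eq_sum_range]
      simp only [Nat.add_sub_cancel, Nat.succ_sub_one]
      apply Finset.sum_congr rfl
      intro k _
      simp only [hf]
      push_cast
      ring_nf
    have step5 : ∑ k ∈ Finset.range N, f k ≤ S :=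
      Summable.sum_le_tsum _ (fun k _ => hfnn k) hsum
    calc ∑ n ∈ Finset.range N, g n
        ≤ ∑ i ∈ Finset.Icc 1 N, ∑ n ∈ Finset.Icc (i - 1) (N - 1),
            (((n : ℝ) + 1) ^ 2)⁻¹ * (L i)⁻¹ := by rw [← step2]; exact step1
      _ ≤ ∑ i ∈ Finset.Icc 1 N, 2 * (((i : ℝ)) * L i)⁻¹ := Finset.sum_le_sum step3
      _ = 2 * ∑ i ∈ Finset.Icc 1 N, ((i : ℝ) * L i)⁻¹ := by rw [Finset.mul_sum]
      _ = 2 * ∑ k ∈ Finset.range N, f k := by rw [step4]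
      _ ≤ 2 * S := by linarith [step5]
  have hsummable : Summable g := summable_of_sum_range_le hgnn key
  exact ⟨hsummable, Summable.tsum_le_of_sum_range_le hsummable key⟩
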